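/- Let n be a positive integer and let α, β be order preserving partial contractions in OCP_n. Then α R* β if and only if ker α = ker β (equality of relations; in particular dom α = dom β and, for all x, y ∈ dom α, xα = yα if and only if xβ = yβ). -/

import Mathlib

/-- A partial transformation of the chain `[n] = {1,…,n}`, encoded as a map
`ℕ → Option ℕ`: `α x = some y` means `x ∈ dom α` and `xα = y`. -/
def IsPT (n : ℕ) (α : ℕ → Option ℕ) : Prop :=
  ∀ x y, α x = some y → x ∈ Set.Icc 1 n ∧ y ∈ Set.Icc 1 n

/-- Composition of partial transformations: apply `α` first, then `β`. -/
def pcomp (α β : ℕ → Option ℕ) : ℕ → Option ℕ := fun x => (α x).bind β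

/-- `α` is a contraction: `|xα − yα| ≤ |x − y|` on its domain. -/
def IsContraction (α : ℕ → Option ℕ) : Prop :=
  ∀ x y a b, α x = some a → α y = some b → Nat.dist a b ≤ Nat.dist x y

def IsOrderPreserving (α : ℕ → Option ℕ) : Prop :=
  ∀ x y a b, α x = some a → α y = some b → x ≤ y → a ≤ b

def IsOrderReversing (α : ℕ → Option ℕ) : Prop :=
  ∀ x y a b, α x = some a → α y = some b → x ≤ y → b ≤ a

/-- `CP n`: the partial contractions of `[n]`. -/
def CP (n : ℕ) (α : ℕ → Option ℕ) : Prop := IsPT n α ∧ IsContraction α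

/-- `OCP n`: the order preserving partial contractions of `[n]`. -/
def OCP (n : ℕ) (α : ℕ → Option ℕ) : Prop := CP n α ∧ IsOrderPreserving α

/-- `ORCP n`: the order preserving or order reversing partial contractions of `[n]`. -/
def ORCP (n : ℕ) (α : ℕ → Option ℕ) : Prop :=
  CP n α ∧ (IsOrderPreserving α ∨ IsOrderReversing α)

/-- The image of a partial transformation. -/
def img (α : ℕ → Option ℕ) : Set ℕ := {y | ∃ x, α x = some y}

/-- The kernel of a partial transformation:
`{(x,y) ∈ dom α × dom α : xα = yα}`. -/
def pker (α : ℕ → Option ℕ) : Set (ℕ × ℕ) :=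
  {p | α p.1 ≠ none ∧ α p.1 = α p.2}

/-- The starred Green's relation `L*` relative to the class `S`:
`α L* β` iff for all `γ, δ ∈ S`, `αγ = αδ ⟺ βγ = βδ`. -/
def LStar (S : (ℕ → Option ℕ) → Prop) (α β : ℕ → Option ℕ) : Prop :=
  ∀ γ δ, S γ → S δ → (pcomp α γ = pcomp α δ ↔ pcomp β γ = pcomp β δ)

/-- The starred Green's relation `R*` relative to the class `S`:
`α R* β` iff for all `γ, δ ∈ S`, `γα = δα ⟺ γβ = δβ`. -/
def RStar (S : (ℕ → Option ℕ) → Prop) (α β : ℕ → Option ℕ) : Prop :=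
  ∀ γ δ, S γ → S δ → (pcomp γ α = pcomp δ α ↔ pcomp γ β = pcomp δ β)

/-- Theorem 2.1(ii) for `OCP n`: `α R* β` iff `ker α = ker β`. -/

def constMap (n c : ℕ) : ℕ → Option ℕ := fun t => if t ∈ Set.Icc 1 n then some c else none

lemma constMap_OCP (n c : ℕ) (hc : c ∈ Set.Icc 1 n) : OCP n (constMap n c) := by
  refine ⟨⟨?_, ?_⟩, ?_⟩
  · intro x y h
    unfold constMap at h
    split at h
    · injection h with h
      subst h
      exact ⟨by assumption, hc⟩
    · simp at h
  · intro x y a b hx hy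
    unfold constMap at hx hy
    split at hx <;> simp_all
  · intro x y a b hx hy _
    unfold constMap at hx hy
    split at hx <;> simp_all

lemma empty_OCP (n : ℕ) : OCP n (fun _ => none) := by
  exact ⟨⟨fun x y h => by simp at h, fun x y a b hx => by simp at hx⟩,
    fun x y a b hx => by simp at hx⟩

lemma dom_eq_of_pker_eq {α β : ℕ → Option ℕ} (hker : pker α = pker β) (x : ℕ) :
    α x = none ↔ β x = none := by
  have h : (x, x) ∈ pker α ↔ (x, x) ∈ pker β := by rw [hker]
  simp only [pker, Set.mem_setOf_eq, eq_self_iff_true, and_true, ne_eq] at h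
  exact not_iff_not.mp h

lemma pker_sub_of_rstar (n : ℕ) (hn : 0 < n) (α β : ℕ → Option ℕ)
    (hα : OCP n α) (h : RStar (OCP n) α β) : pker α ⊆ pker β := by
  rintro ⟨x, y⟩ ⟨hne, heq⟩
  obtain ⟨a, ha⟩ : ∃ a, α x = some a := Option.ne_none_iff_exists'.mp hne
  have hx : x ∈ Set.Icc 1 n := (hα.1.1 x a ha).1
  have hy : y ∈ Set.Icc 1 n := (hα.1.1 y a (heq ▸ ha)).1
  have h1 : 1 ∈ Set.Icc 1 n := Set.mem_Icc.mpr ⟨le_refl 1, hn⟩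
  -- first: β x ≠ none
  have hbx : β x ≠ none := by
    intro hbx
    have hc : pcomp (constMap n x) β = pcomp (fun _ => none) β := by
      funext t
      unfold pcomp constMap
      split
      · simp [hbx]
      · simp
    have := (h (constMap n x) (fun _ => none) (constMap_OCP n x hx) (empty_OCP n)).mpr hc
    have := congrFun this 1
    unfold pcomp constMap at this
    rw [if_pos h1] at this
    simp [ha] at this
  -- second: β x = β y
  have hc : pcomp (constMap n x) α = pcomp (constMap n y) α := by
    funext t
    unfold pcomp constMap
    split <;> simp [heq]
  have := (h (constMap n x) (constMap n y) (constMap_OCP n x hx) (constMap_OCP n y hy)).mp hc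
  have h2 := congrFun this 1
  unfold pcomp constMap at h2
  rw [if_pos h1, if_pos h1] at h2
  simpa using ⟨hbx, by simpa using h2⟩

lemma rstar_of_pker_eq_aux {α β γ δ : ℕ → Option ℕ} (hker : pker α = pker β)
    (hc : pcomp γ α = pcomp δ α) : pcomp γ β = pcomp δ β := by
  funext t
  have ht := congrFun hc t
  unfold pcomp at ht ⊢
  cases hγ : γ t with
  | none =>
    cases hδ : δ t with
    | none => rfl
    | some b =>
      rw [hγ, hδ] at ht
      simp only [Option.bind_none, Option.bind_some] at ht
      have : β b = none := (dom_eq_of_pker_eq hker b).mp ht.symm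
      simp [this]
  | some a =>
    cases hδ : δ t with
    | none =>
      rw [hγ, hδ] at ht
      simp only [Option.bind_none, Option.bind_some] at ht
      have : β a = none := (dom_eq_of_pker_eq hker a).mp ht
      simp [this]
    | some b =>
      rw [hγ, hδ] at ht
      simp only [Option.bind_some] at ht ⊢
      by_cases hna : α a = none
      · have h1 : β a = none := (dom_eq_of_pker_eq hker a).mp hna
        have h2 : β b = none := (dom_eq_of_pker_eq hker b).mp (ht ▸ hna)
        rw [h1, h2]
      · have : (a, b) ∈ pker β := hker ▸ (⟨hna, ht⟩ : (a, b) ∈ pker α)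
        exact this.2

theorem rstar_iff_ker_eq_OCP (n : ℕ) (hn : 0 < n) (α β : ℕ → Option ℕ)
    (hα : OCP n α) (hβ : OCP n β) :
    RStar (OCP n) α β ↔ pker α = pker β := by
  constructor
  · intro h
    apply Set.Subset.antisymm
    · exact pker_sub_of_rstar n hn α β hα h
    · exact pker_sub_of_rstar n hn β α hβ (fun γ δ hγ hδ => (h γ δ hγ hδ).symm)
  · intro hker γ δ _ _
    exact ⟨rstar_of_pker_eq_aux hker, rstar_of_pker_eq_aux hker.symm⟩
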